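/- If B and C are unital C*-subalgebras of a C*-probability space (A,ρ) that are freely independent with respect to ρ, and the restriction of ρ to each of B and C is a trace, then the restriction of ρ to the C*-subalgebra generated by B and C is a trace. -/

import Mathlib

open scoped ComplexOrder

/-- Free independence of two subsets of a C*-probability space. -/
def FreelyIndependent {A : Type*} [NormedRing A] [StarRing A] [NormedAlgebra ℂ A]
    (ρ : A →ₗ[ℂ] ℂ) (B C : Set A) : Prop :=
  ∀ (k : ℕ) (a : Fin k → A) (s : Fin k → Bool),
    (∀ j, a j ∈ (bif s j then B else C)) →
    (∀ j, ρ (a j) = 0) →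
    (∀ (j : ℕ) (h : j + 1 < k), s ⟨j, Nat.lt_of_succ_lt h⟩ ≠ s ⟨j + 1, h⟩) →
    0 < k → ρ (List.ofFn a).prod = 0

section Aux
variable {A : Type*} [CStarAlgebra A] (ρ : A →ₗ[ℂ] ℂ)

lemma aux_herm (hρpos : ∀ a : A, 0 ≤ ρ (star a * a)) (a : A) :
    ρ (star a) = (starRingEnd ℂ) (ρ a) := by
  have him : ∀ x : A, (ρ (star x * x)).im = 0 := fun x => by
    have := (Complex.le_def.mp (hρpos x)).2
    simpa using this.symm
  have h1 : (ρ (1 : A)).im = 0 := by simpa using him 1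
  have e1 : star (1 + a) * (1 + a) = 1 + a + star a + star a * a := by
    simp [star_add, add_mul, mul_add]; abel
  have e2 : star (1 + Complex.I • a) * (1 + Complex.I • a)
      = 1 + Complex.I • a - Complex.I • star a + star a * a := by
    simp [star_add, star_smul, add_mul, mul_add, smul_smul, sub_eq_add_neg]
    module
  have h2 := him (1 + a)
  rw [e1] at h2
  simp only [map_add] at h2
  have h3 := him (1 + Complex.I • a)
  rw [e2] at h3
  simp only [map_add, map_sub, map_smul] at h3
  have hx := him a
  simp only [Complex.add_im, Complex.sub_im, smul_eq_mul, Complex.mul_im, Complex.mul_re, Complex.I_re, Complex.I_im] at h2 h3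
  apply Complex.ext <;>
  · simp only [Complex.conj_re, Complex.conj_im]
    nlinarith [h2, h3, hx, h1]

lemma aux_bound_sa (hρ1 : ρ 1 = 1) (hρpos : ∀ a : A, 0 ≤ ρ (star a * a))
    {h : A} (hh : IsSelfAdjoint h) : ‖ρ h‖ ≤ ‖h‖ := by
  letI : PartialOrder A := CStarAlgebra.spectralOrder A
  letI : StarOrderedRing A := CStarAlgebra.spectralOrderedRing A
  have mono : ∀ x : A, 0 ≤ x → 0 ≤ ρ x := by
    intro x hx
    rw [StarOrderedRing.nonneg_iff] at hx
    induction hx using AddSubmonoid.closure_induction with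
    | mem x hx => obtain ⟨s, rfl⟩ := hx; exact hρpos s
    | zero => simp
    | add x y _ _ hx hy => rw [map_add]; exact add_nonneg hx hy
  have ealg : ∀ r : ℝ, ρ (algebraMap ℝ A r) = (r : ℂ) := by
    intro r
    rw [IsScalarTower.algebraMap_apply ℝ ℂ A, Algebra.algebraMap_eq_smul_one, map_smul, hρ1]
    simp
  have hre : (ρ h).im = 0 := by
    have := aux_herm ρ hρpos h
    rw [hh.star_eq] at this
    have := Complex.conj_eq_iff_im.mp this.symm
    exact this
  have hub : ρ h ≤ (‖h‖ : ℂ) := by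
    have := mono _ (sub_nonneg.mpr hh.le_algebraMap_norm_self)
    rw [map_sub, ealg] at this
    exact sub_nonneg.mp this
  have hlb : (-‖h‖ : ℂ) ≤ ρ h := by
    have := mono _ (sub_nonneg.mpr hh.neg_algebraMap_norm_le_self)
    rw [map_sub, map_neg, ealg] at this
    have := sub_nonneg.mp this
    simpa using this
  have h1 := (Complex.le_def.mp hub).1
  have h2 := (Complex.le_def.mp hlb).1
  have : ρ h = ((ρ h).re : ℂ) := (Complex.re_add_im (ρ h)) ▸ by rw [hre]; simp
  rw [this, Complex.norm_real, Real.norm_eq_abs, abs_le]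
  constructor
  · simpa using h2
  · simpa using h1

lemma aux_bound (hρ1 : ρ 1 = 1) (hρpos : ∀ a : A, 0 ≤ ρ (star a * a)) (a : A) :
    ‖ρ a‖ ≤ 2 * ‖a‖ := by
  have hdecomp := realPart_add_I_smul_imaginaryPart a
  have h1 : ‖(realPart a : A)‖ ≤ ‖a‖ := by
    rw [realPart_apply_coe]
    calc ‖(2⁻¹ : ℝ) • (a + star a)‖ ≤ 2⁻¹ * (‖a‖ + ‖star a‖) := by
          rw [norm_smul]
          gcongr
          · simp
          · exact norm_add_le _ _
      _ = ‖a‖ := by rw [norm_star]; ring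
  have h2 : ‖(imaginaryPart a : A)‖ ≤ ‖a‖ := by
    rw [imaginaryPart_apply_coe]
    calc ‖-Complex.I • (2⁻¹ : ℝ) • (a - star a)‖ = ‖(2⁻¹ : ℝ) • (a - star a)‖ := by
          rw [norm_smul]; simp
      _ ≤ 2⁻¹ * (‖a‖ + ‖star a‖) := by
          rw [norm_smul]
          have : ‖(2⁻¹:ℝ)‖ = 2⁻¹ := by simp
          rw [this]
          gcongr
          exact (norm_sub_le _ _)
      _ = ‖a‖ := by rw [norm_star]; ring
  calc ‖ρ a‖ = ‖ρ (realPart a : A) + Complex.I * ρ (imaginaryPart a : A)‖ := by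
        conv_lhs => rw [← hdecomp]
        rw [map_add, map_smul]
        simp
    _ ≤ ‖ρ (realPart a : A)‖ + ‖ρ (imaginaryPart a : A)‖ := by
        refine (norm_add_le _ _).trans ?_
        gcongr
        simp
    _ ≤ ‖a‖ + ‖a‖ := by
        gcongr
        · exact (aux_bound_sa ρ hρ1 hρpos (realPart a).2).trans h1
        · exact (aux_bound_sa ρ hρ1 hρpos (imaginaryPart a).2).trans h2
    _ = 2 * ‖a‖ := by ring

lemma aux_cont (hρ1 : ρ 1 = 1) (hρpos : ∀ a : A, 0 ≤ ρ (star a * a)) :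
    Continuous ρ := AddMonoidHomClass.continuous_of_bound ρ 2 (aux_bound ρ hρ1 hρpos)

end Aux

section Words
variable {A : Type*} [CStarAlgebra A] (ρ : A →ₗ[ℂ] ℂ) (B C : StarSubalgebra ℂ A)

/-- The letter predicate: `a` is a centered element of the algebra labelled by `b`. -/
def Ltr (a : A) (b : Bool) : Prop := a ∈ (bif b then (B : Set A) else (C : Set A)) ∧ ρ a = 0

/-- alternating centered words (including the empty word, whose product is `1`). -/
def altGens : Set A :=
  {x | ∃ (l : List A) (s : List Bool),
    List.Forall₂ (Ltr ρ B C) l s ∧ s.Chain' (· ≠ ·) ∧ x = l.prod}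

lemma one_mem_altGens : (1 : A) ∈ altGens ρ B C :=
  ⟨[], [], List.Forall₂.nil, List.isChain_nil, List.prod_nil.symm⟩

lemma rho_alt_zero (hfree : FreelyIndependent ρ (B : Set A) (C : Set A))
    {l : List A} {s : List Bool} (hf : List.Forall₂ (Ltr ρ B C) l s)
    (hs : s.Chain' (· ≠ ·)) (hne : l ≠ []) : ρ l.prod = 0 := by
  have hlen : l.length = s.length := hf.length_eq
  have hget := (List.forall₂_iff_get.mp hf).2
  have := hfree l.length l.get (fun i => s.get (Fin.cast hlen i))
    (fun j => (hget j.1 j.2 (hlen ▸ j.2)).1)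
    (fun j => (hget j.1 j.2 (hlen ▸ j.2)).2)
    (fun j h => by
      have hj : j + 1 < s.length := by omega
      exact List.isChain_iff_getElem.mp hs j hj)
    (List.length_pos_iff.mpr hne)
  rwa [List.ofFn_get] at this

/-- splitting a `Forall₂` along a concatenation on the left. -/
lemma forall₂_concat {α β : Type*} {R : α → β → Prop} :
    ∀ {l : List α} {s : List β} {a : α}, List.Forall₂ R (l ++ [a]) s →
      ∃ s₀ b, s = s₀ ++ [b] ∧ List.Forall₂ R l s₀ ∧ R a b := by
  intro l
  induction l with
  | nil =>
    intro s a h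
    simp only [List.nil_append] at h
    rcases h with _ | ⟨hab, h2⟩
    cases h2
    exact ⟨[], _, rfl, List.Forall₂.nil, hab⟩
  | cons x xs ih =>
    intro s a h
    rcases h with _ | ⟨hx, h2⟩
    obtain ⟨s₀, b, rfl, hf, hab⟩ := ih h2
    exact ⟨_ :: s₀, b, rfl, List.Forall₂.cons hx hf, hab⟩

end Words

section Words2
variable {A : Type*} [CStarAlgebra A] (ρ : A →ₗ[ℂ] ℂ) (B C : StarSubalgebra ℂ A)

/-- The span of the alternating centered words. -/
noncomputable def altSpan : Submodule ℂ A := Submodule.span ℂ (altGens ρ B C)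

lemma centered_mem {a a' : A} {b : Bool} (hρ1 : ρ 1 = 1)
    (ha : a ∈ (bif b then (B : Set A) else (C : Set A)))
    (ha' : a' ∈ (bif b then (B : Set A) else (C : Set A))) :
    Ltr ρ B C (a * a' - ρ (a * a') • 1) b := by
  constructor
  · cases b <;>
    · simp only [Bool.cond_false, Bool.cond_true, SetLike.mem_coe] at ha ha' ⊢
      exact sub_mem (mul_mem ha ha') (SMulMemClass.smul_mem _ (one_mem _))
  · rw [map_sub, map_smul, hρ1, smul_eq_mul, mul_one, sub_self]

lemma gen_mul_mem (hρ1 : ρ 1 = 1) :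
    ∀ (l' : List A) (s' : List Bool) (l : List A) (s : List Bool),
      List.Forall₂ (Ltr ρ B C) l s → s.Chain' (· ≠ ·) →
      List.Forall₂ (Ltr ρ B C) l' s' → s'.Chain' (· ≠ ·) →
      l.prod * l'.prod ∈ altSpan ρ B C := by
  intro l'
  induction l' with
  | nil =>
    intro s' l s hf hs _ _
    rw [List.prod_nil, mul_one]
    exact Submodule.subset_span ⟨l, s, hf, hs, rfl⟩
  | cons a' l₁ ih =>
    intro s' l s hf hs hf' hs'
    rcases hf' with _ | @⟨_, b', _, s₁, ha', hf₁⟩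
    rcases List.eq_nil_or_concat l with rfl | ⟨l₀, a, rfl⟩
    · rw [List.prod_nil, one_mul]
      exact Submodule.subset_span ⟨a' :: l₁, b' :: s₁, List.Forall₂.cons ha' hf₁, hs', rfl⟩
    · rw [List.concat_eq_append] at hf ⊢
      obtain ⟨s₀, b, rfl, hf₀, hab⟩ := forall₂_concat hf
      by_cases hbb : b = b'
      · -- same algebra at the junction: collapse
        subst hbb
        set c : A := a * a' - ρ (a * a') • 1 with hc
        have hcmem : Ltr ρ B C c b := centered_mem ρ B C hρ1 hab.1 ha'.1
        have key : (l₀ ++ [a]).prod * (a' :: l₁).prod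
            = (l₀ ++ c :: l₁).prod + ρ (a * a') • (l₀.prod * l₁.prod) := by
          rw [hc]
          simp only [List.prod_append, List.prod_cons, List.prod_nil, mul_one, sub_mul,
            mul_sub, smul_mul_assoc, one_mul, mul_smul_comm, mul_assoc]
          abel
        rw [key]
        refine add_mem (Submodule.subset_span ?_) (Submodule.smul_mem _ _ ?_)
        · refine ⟨l₀ ++ c :: l₁, s₀ ++ b :: s₁, List.rel_append hf₀
            (List.Forall₂.cons hcmem hf₁), ?_, rfl⟩
          refine List.isChain_append.mpr ?_
          refine ⟨(List.isChain_append.mp hs).1, hs', ?_⟩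
          have := (List.isChain_append.mp hs).2.2
          simpa using this
        · exact ih s₁ l₀ s₀ hf₀ (List.isChain_append.mp hs).1 hf₁ hs'.tail
      · -- different algebras: the concatenation is alternating
        have : (l₀ ++ [a]).prod * (a' :: l₁).prod = ((l₀ ++ [a]) ++ (a' :: l₁)).prod := by
          simp [List.prod_append, mul_assoc]
        rw [this]
        refine Submodule.subset_span ⟨_, (s₀ ++ [b]) ++ (b' :: s₁),
          List.rel_append (List.rel_append hf₀ (List.Forall₂.cons hab List.Forall₂.nil))
            (List.Forall₂.cons ha' hf₁), ?_, rfl⟩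
        refine List.isChain_append.mpr ?_
        refine ⟨hs, hs', ?_⟩
        simpa using hbb

end Words2

section Words3
variable {A : Type*} [CStarAlgebra A] (ρ : A →ₗ[ℂ] ℂ) (B C : StarSubalgebra ℂ A)

lemma altSpan_mul_mem (hρ1 : ρ 1 = 1) :
    ∀ x ∈ altSpan ρ B C, ∀ y ∈ altSpan ρ B C, x * y ∈ altSpan ρ B C := by
  have base : ∀ x ∈ altGens ρ B C, ∀ y ∈ altGens ρ B C, x * y ∈ altSpan ρ B C := by
    rintro x ⟨l, s, hf, hs, rfl⟩ y ⟨l', s', hf', hs', rfl⟩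
    exact gen_mul_mem ρ B C hρ1 l' s' l s hf hs hf' hs'
  have step1 : ∀ x ∈ altSpan ρ B C, ∀ y ∈ altGens ρ B C, x * y ∈ altSpan ρ B C := by
    intro x hx
    induction hx using Submodule.span_induction with
    | mem x hx => exact base x hx
    | zero => intro y _; rw [zero_mul]; exact zero_mem _
    | add x₁ x₂ _ _ h1 h2 => intro y hy; rw [add_mul]; exact add_mem (h1 y hy) (h2 y hy)
    | smul z x _ h => intro y hy; rw [smul_mul_assoc]; exact Submodule.smul_mem _ _ (h y hy)
  intro x hx y hy
  induction hy using Submodule.span_induction with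
  | mem y hy => exact step1 x hx y hy
  | zero => rw [mul_zero]; exact zero_mem _
  | add y₁ y₂ _ _ h1 h2 => rw [mul_add]; exact add_mem h1 h2
  | smul z y _ h => rw [mul_smul_comm]; exact Submodule.smul_mem _ _ h

lemma star_list_prod (l : List A) : star l.prod = (l.reverse.map star).prod := by
  induction l with
  | nil => simp
  | cons a t ih => simp [List.prod_cons, star_mul, ih, List.prod_append]

lemma altSpan_star_mem (hρpos : ∀ a : A, 0 ≤ ρ (star a * a)) :
    ∀ x ∈ altSpan ρ B C, star x ∈ altSpan ρ B C := by
  have base : ∀ x ∈ altGens ρ B C, star x ∈ altGens ρ B C := by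
    rintro x ⟨l, s, hf, hs, rfl⟩
    refine ⟨l.reverse.map star, s.reverse, ?_, ?_, by rw [star_list_prod]⟩
    · refine List.forall₂_map_left_iff.mpr (List.rel_reverse (hf.imp ?_))
      rintro a b ⟨hmem, hz⟩
      refine ⟨?_, ?_⟩
      · cases b <;>
        · simp only [Bool.cond_false, Bool.cond_true, SetLike.mem_coe] at hmem ⊢
          exact star_mem hmem
      · rw [aux_herm ρ hρpos, hz, map_zero]
    · refine List.isChain_reverse.mpr ?_
      exact hs.imp fun a b h => Ne.symm h
  intro x hx
  induction hx using Submodule.span_induction with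
  | mem x hx => exact Submodule.subset_span (base x hx)
  | zero => rw [star_zero]; exact zero_mem _
  | add x y _ _ h1 h2 => rw [star_add]; exact add_mem h1 h2
  | smul z x _ h => rw [star_smul]; exact Submodule.smul_mem _ _ h

lemma subset_altSpan (hρ1 : ρ 1 = 1) :
    (B : Set A) ∪ (C : Set A) ⊆ (altSpan ρ B C : Set A) := by
  rintro x (hx | hx)
  · have : x = (x - ρ x • 1) + ρ x • 1 := (sub_add_cancel _ _).symm
    rw [this]
    refine add_mem (Submodule.subset_span ?_) (Submodule.smul_mem _ _
      (Submodule.subset_span (one_mem_altGens ρ B C)))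
    refine ⟨[x - ρ x • 1], [true], ?_, List.isChain_singleton _, by simp⟩
    refine List.Forall₂.cons ⟨?_, ?_⟩ List.Forall₂.nil
    · simpa using sub_mem hx (SMulMemClass.smul_mem _ (one_mem _))
    · rw [map_sub, map_smul, hρ1, smul_eq_mul, mul_one, sub_self]
  · have : x = (x - ρ x • 1) + ρ x • 1 := (sub_add_cancel _ _).symm
    rw [this]
    refine add_mem (Submodule.subset_span ?_) (Submodule.smul_mem _ _
      (Submodule.subset_span (one_mem_altGens ρ B C)))
    refine ⟨[x - ρ x • 1], [false], ?_, List.isChain_singleton _, by simp⟩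
    refine List.Forall₂.cons ⟨?_, ?_⟩ List.Forall₂.nil
    · simpa using sub_mem hx (SMulMemClass.smul_mem _ (one_mem _))
    · rw [map_sub, map_smul, hρ1, smul_eq_mul, mul_one, sub_self]

lemma adjoin_subset_altSpan (hρ1 : ρ 1 = 1) (hρpos : ∀ a : A, 0 ≤ ρ (star a * a)) :
    (StarAlgebra.adjoin ℂ ((B : Set A) ∪ (C : Set A)) : Set A) ⊆ (altSpan ρ B C : Set A) := by
  let SA : StarSubalgebra ℂ A :=
    { (altSpan ρ B C).toSubalgebra (Submodule.subset_span (one_mem_altGens ρ B C))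
        (fun x y hx hy => altSpan_mul_mem ρ B C hρ1 x hx y hy)
      with
      star_mem' := fun hx => altSpan_star_mem ρ B C hρpos _ hx }
  have hle : StarAlgebra.adjoin ℂ ((B : Set A) ∪ (C : Set A)) ≤ SA :=
    StarAlgebra.adjoin_le (subset_altSpan ρ B C hρ1)
  intro x hx
  exact Submodule.mem_toSubalgebra.mp (hle hx)

end Words3

section Cross
variable {A : Type*} [CStarAlgebra A] (ρ : A →ₗ[ℂ] ℂ) (B C : StarSubalgebra ℂ A)

lemma cross_single (hρ1 : ρ 1 = 1)
    (hfree : FreelyIndependent ρ (B : Set A) (C : Set A))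
    (htrB : ∀ x ∈ B, ∀ y ∈ B, ρ (x * y) = ρ (y * x))
    (htrC : ∀ x ∈ C, ∀ y ∈ C, ρ (x * y) = ρ (y * x))
    (t : Bool) (g : A) (hg : g ∈ (bif t then (B : Set A) else (C : Set A))) (hgz : ρ g = 0) :
    ∀ (l : List A) (s : List Bool), List.Forall₂ (Ltr ρ B C) l s →
      s.Chain' (· ≠ ·) → ρ (g * l.prod) = ρ (l.prod * g) := by
  have two_zero : ∀ (p q : A) (u v : Bool), Ltr ρ B C p u → Ltr ρ B C q v → u ≠ v →
      ρ (p * q) = 0 := by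
    intro p q u v hp hq huv
    have := rho_alt_zero ρ B C hfree
      (List.Forall₂.cons hp (List.Forall₂.cons hq List.Forall₂.nil))
      (List.isChain_pair.mpr huv) (by simp)
    simpa using this
  have tr : ∀ (u : Bool) (x y : A), x ∈ (bif u then (B : Set A) else (C : Set A)) →
      y ∈ (bif u then (B : Set A) else (C : Set A)) → ρ (x * y) = ρ (y * x) := by
    intro u x y hx hy
    cases u
    · exact htrC x hx y hy
    · exact htrB x hx y hy
  intro l s hf hs
  rcases hf with _ | @⟨a, b, l₁, s₁, ha, hf₁⟩
  · simp
  rcases List.eq_nil_or_concat l₁ with rfl | ⟨l₂, a₂, hl₂⟩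
  · -- single letter word
    cases hf₁
    simp only [List.prod_cons, List.prod_nil, mul_one]
    by_cases hbt : b = t
    · subst hbt
      exact tr b g a hg ha.1
    · rw [two_zero g a t b ⟨hg, hgz⟩ ha (fun h => hbt h.symm),
        two_zero a g b t ha ⟨hg, hgz⟩ hbt]
  · -- length ≥ 2 : both sides vanish
    have hlne : l₁ ≠ [] := by rw [List.concat_eq_append] at hl₂; simp [hl₂]
    have hleft : ρ (g * (a :: l₁).prod) = 0 := by
      by_cases hbt : t = b
      · subst hbt
        set c : A := g * a - ρ (g * a) • 1 with hc
        have hcmem : Ltr ρ B C c t := centered_mem ρ B C hρ1 hg ha.1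
        have key : g * (a :: l₁).prod = c * l₁.prod + ρ (g * a) • l₁.prod := by
          rw [hc]
          simp only [List.prod_cons, sub_mul, smul_mul_assoc, one_mul, ← mul_assoc]
          abel
        rw [key, map_add, map_smul]
        have h1 : ρ (c * l₁.prod) = 0 := by
          have := rho_alt_zero ρ B C hfree (List.Forall₂.cons hcmem hf₁) hs (by simp)
          simpa [List.prod_cons] using this
        have h2 : ρ l₁.prod = 0 :=
          rho_alt_zero ρ B C hfree hf₁ hs.tail hlne
        rw [h1, h2, smul_zero, add_zero]
      · have := rho_alt_zero ρ B C hfree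
          (List.Forall₂.cons ⟨hg, hgz⟩ (List.Forall₂.cons ha hf₁))
          (List.isChain_cons_cons.mpr ⟨hbt, hs⟩) (by simp)
        simpa [List.prod_cons, mul_assoc] using this
    have hright : ρ ((a :: l₁).prod * g) = 0 := by
      rw [List.concat_eq_append] at hl₂
      rw [hl₂] at hf₁ ⊢
      have hcons : a :: l₂ ++ [a₂] = (a :: l₂) ++ [a₂] := rfl
      have hf' : List.Forall₂ (Ltr ρ B C) ((a :: l₂) ++ [a₂]) (b :: s₁) :=
        List.Forall₂.cons ha hf₁
      obtain ⟨s₀, b₂, hseq, hf₀, ha₂⟩ := forall₂_concat hf'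
      have hs0 : (b :: s₁).Chain' (· ≠ ·) := hs
      rw [hseq] at hs0
      have hprodsplit : (a :: (l₂ ++ [a₂])).prod = (a :: l₂).prod * a₂ := by
        rw [← List.cons_append, List.prod_append]
        simp
      by_cases hb2t : b₂ = t
      · subst hb2t
        set c : A := a₂ * g - ρ (a₂ * g) • 1 with hc
        have hcmem : Ltr ρ B C c b₂ := centered_mem ρ B C hρ1 ha₂.1 hg
        have key : (a :: (l₂ ++ [a₂])).prod * g
            = ((a :: l₂) ++ [c]).prod + ρ (a₂ * g) • (a :: l₂).prod := by
          rw [hprodsplit, List.prod_append, hc]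
          simp only [List.prod_cons, List.prod_nil, mul_one, mul_sub, mul_smul_comm, mul_one,
            mul_assoc]
          abel
        rw [key, map_add, map_smul]
        have h1 : ρ (((a :: l₂) ++ [c]).prod) = 0 := by
          refine rho_alt_zero ρ B C hfree (s := s₀ ++ [b₂])
            (List.rel_append hf₀ (List.Forall₂.cons hcmem List.Forall₂.nil)) hs0 (by simp)
        have h2 : ρ ((a :: l₂).prod) = 0 := by
          refine rho_alt_zero ρ B C hfree hf₀ ?_ (by simp)
          exact (List.isChain_append.mp hs0).1
        rw [h1, h2, smul_zero, add_zero]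
      · have hword : List.Forall₂ (Ltr ρ B C) (((a :: l₂) ++ [a₂]) ++ [g])
            ((s₀ ++ [b₂]) ++ [t]) :=
          List.rel_append (hseq ▸ hf') (List.Forall₂.cons ⟨hg, hgz⟩ List.Forall₂.nil)
        have hchain : ((s₀ ++ [b₂]) ++ [t]).Chain' (· ≠ ·) := by
          refine List.isChain_append.mpr ?_
          refine ⟨hs0, List.isChain_singleton _, ?_⟩
          simpa using hb2t
        have := rho_alt_zero ρ B C hfree hword hchain (by simp)
        rw [List.prod_append, List.prod_append] at this
        simpa [hprodsplit, List.prod_append] using this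
    rw [hleft, hright]

end Cross


/-- If `B` and `C` are freely independent unital C*-subalgebras of a C*-probability space
`(A,ρ)` and `ρ` restricts to a trace on each of `B` and `C`, then `ρ` restricts to a trace
on the C*-subalgebra generated by `B` and `C`. -/
theorem stmt10 {A : Type*} [CStarAlgebra A]
    (ρ : A →ₗ[ℂ] ℂ) (hρ1 : ρ 1 = 1) (hρpos : ∀ a : A, 0 ≤ ρ (star a * a))
    (B C : StarSubalgebra ℂ A)
    (hfree : FreelyIndependent ρ (B : Set A) (C : Set A))
    (htrB : ∀ x ∈ B, ∀ y ∈ B, ρ (x * y) = ρ (y * x))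
    (htrC : ∀ x ∈ C, ∀ y ∈ C, ρ (x * y) = ρ (y * x)) :
    ∀ x ∈ (StarAlgebra.adjoin ℂ ((B : Set A) ∪ (C : Set A))).topologicalClosure,
    ∀ y ∈ (StarAlgebra.adjoin ℂ ((B : Set A) ∪ (C : Set A))).topologicalClosure,
      ρ (x * y) = ρ (y * x) := by
  have hherm := aux_herm ρ hρpos
  set S := StarAlgebra.adjoin ℂ ((B : Set A) ∪ (C : Set A)) with hSdef
  have htr : ∀ x ∈ S, ∀ y ∈ S, ρ (x * y) = ρ (y * x) := by
    intro x hx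
    induction hx using StarAlgebra.adjoin_induction with
    | mem g hg =>
      intro y hy
      have hyM : y ∈ altSpan ρ B C := adjoin_subset_altSpan ρ B C hρ1 hρpos hy
      clear hy
      induction hyM using Submodule.span_induction with
      | mem y hy' =>
        obtain ⟨l, s, hf, hs, rfl⟩ := hy'
        have hsplit : ∀ t : Bool, g ∈ (bif t then (B : Set A) else (C : Set A)) →
            ρ (g * l.prod) = ρ (l.prod * g) := by
          intro t hgt
          have hg0 : Ltr ρ B C (g - ρ g • 1) t := by
            refine ⟨?_, by rw [map_sub, map_smul, hρ1, smul_eq_mul, mul_one, sub_self]⟩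
            cases t <;>
            · simp only [Bool.cond_false, Bool.cond_true, SetLike.mem_coe] at hgt ⊢
              exact sub_mem hgt (SMulMemClass.smul_mem _ (one_mem _))
          have hcross := cross_single ρ B C hρ1 hfree htrB htrC t (g - ρ g • 1)
            hg0.1 hg0.2 l s hf hs
          have e1 : g * l.prod = (g - ρ g • 1) * l.prod + ρ g • l.prod := by
            rw [sub_mul, smul_mul_assoc, one_mul]; abel
          have e2 : l.prod * g = l.prod * (g - ρ g • 1) + ρ g • l.prod := by
            rw [mul_sub, mul_smul_comm, mul_one]; abel
          rw [e1, e2, map_add, map_add, hcross]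
        rcases hg with hgB | hgC
        · exact hsplit true hgB
        · exact hsplit false hgC
      | zero => simp
      | add y₁ y₂ _ _ h1 h2 => rw [mul_add, add_mul, map_add, map_add, h1, h2]
      | smul z y _ h => rw [mul_smul_comm, smul_mul_assoc, map_smul, map_smul, h]
    | algebraMap r =>
      intro y _
      rw [Algebra.commutes]
    | add x₁ x₂ hx₁ hx₂ h1 h2 =>
      intro y hy
      rw [add_mul, mul_add, map_add, map_add, h1 y hy, h2 y hy]
    | mul x₁ x₂ hx₁ hx₂ h1 h2 =>
      intro y hy
      have e1 : ρ (x₁ * x₂ * y) = ρ (x₂ * y * x₁) := by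
        rw [mul_assoc]; exact h1 (x₂ * y) (mul_mem hx₂ hy)
      have e2 : ρ (x₂ * (y * x₁)) = ρ (y * x₁ * x₂) := h2 (y * x₁) (mul_mem hy hx₁)
      rw [e1, mul_assoc, e2, mul_assoc]
    | star x hx h =>
      intro y hy
      calc ρ (star x * y) = ρ (star (star y * x)) := by rw [star_mul, star_star]
        _ = (starRingEnd ℂ) (ρ (star y * x)) := hherm _
        _ = (starRingEnd ℂ) (ρ (x * star y)) := by rw [h (star y) (star_mem hy)]
        _ = ρ (star (x * star y)) := (hherm _).symm
        _ = ρ (y * star x) := by rw [star_mul, star_star]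
  have hcont : Continuous ρ := aux_cont ρ hρ1 hρpos
  have step1 : ∀ y' ∈ (S : Set A), ∀ x' ∈ closure (S : Set A), ρ (x' * y') = ρ (y' * x') := by
    intro y' hy'
    have hclosed : IsClosed {x' : A | ρ (x' * y') = ρ (y' * x')} :=
      isClosed_eq (hcont.comp (continuous_mul_right y')) (hcont.comp (continuous_mul_left y'))
    exact fun x' hx' => closure_minimal (fun z hz => htr z hz y' hy') hclosed hx'
  intro x hx y hy
  have hxc : x ∈ closure (S : Set A) := hx
  have hyc : y ∈ closure (S : Set A) := hy
  have hclosed : IsClosed {y' : A | ρ (x * y') = ρ (y' * x)} :=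
    isClosed_eq (hcont.comp (continuous_mul_left x)) (hcont.comp (continuous_mul_right x))
  exact closure_minimal (fun y' hy' => step1 y' hy' x hxc) hclosed hyc
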